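/- arXiv:1702.04007 — 2 statements merged into one kernel-verified Lean document; each statement's English description precedes it below -/
import Mathlib

section
/- Let m be a positive integer and x a real number. Define polynomials R_n ∈ ℝ[z] by R_0 = 1, R_1 = z − 2x, and R_n = (z − (2n·x + (n−1)m))·R_{n−1} − (n−1)·n·x·(x+m)·R_{n−2} for n ≥ 2. Let L : ℝ[z] → ℝ be the unique linear functional with L(z^n) = ω̃_n(x,m) for all n ≥ 0. Then L(R_i · R_j) = 0 whenever i ≠ j; that is, the modified bivariate geometric polynomials ω̃_n(x,m) are the moments of the orthogonal polynomial family (R_n). -/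
/-- Stirling numbers of the second kind:
`S(n,k) = (1/k!) ∑_{j=0}^k (−1)^{k−j} C(k,j) j^n`. -/
noncomputable def stirling2 (n k : ℕ) : ℝ :=
  (1 / (k.factorial : ℝ)) *
    ∑ j ∈ Finset.range (k + 1), (-1 : ℝ) ^ (k - j) * (k.choose j) * (j : ℝ) ^ n

/-- Modified bivariate geometric polynomials
`ω̃_n(x,m) = ∑_{k=0}^n (k+1)!·S(n,k)·x^k·m^{n−k}`. -/
noncomputable def geomPolyMod (n : ℕ) (x : ℝ) (m : ℕ) : ℝ :=
  ∑ k ∈ Finset.range (n + 1), ((k + 1).factorial : ℝ) * stirling2 n k * x ^ k * (m : ℝ) ^ (n - k)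

/-- `R_0 = 1`, `R_1 = z − 2x`,
`R_n = (z − (2n·x + (n−1)m))·R_{n−1} − (n−1)·n·x·(x+m)·R_{n−2}` for `n ≥ 2`. -/
noncomputable def geomPolyModOP (m : ℕ) (x : ℝ) : ℕ → Polynomial ℝ
  | 0 => 1
  | 1 => Polynomial.X - Polynomial.C (2 * x)
  | (n + 2) =>
      (Polynomial.X - Polynomial.C (2 * ((n : ℝ) + 2) * x + ((n : ℝ) + 1) * m)) *
          geomPolyModOP m x (n + 1) -
        Polynomial.C (((n : ℝ) + 1) * ((n : ℝ) + 2) * x * (x + m)) * geomPolyModOP m x n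

open Finset Polynomial


noncomputable def ssum (n k : ℕ) : ℝ :=
  ∑ j ∈ Finset.range (k + 1), (-1 : ℝ) ^ (k - j) * (k.choose j) * (j : ℝ) ^ n

lemma stirling2_eq (n k : ℕ) : stirling2 n k = (1 / (k.factorial : ℝ)) * ssum n k := rfl

lemma neg_one_pow_sub (a b : ℕ) (h : b ≤ a) :
    (-1 : ℝ) ^ (a - b) = (-1 : ℝ) ^ a * (-1 : ℝ) ^ b := by
  have hb : (-1 : ℝ) ^ b * (-1 : ℝ) ^ b = 1 := by
    rw [← pow_add, ← two_mul, pow_mul]; norm_num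
  calc (-1 : ℝ) ^ (a - b) = (-1 : ℝ) ^ (a - b) * ((-1 : ℝ) ^ b * (-1 : ℝ) ^ b) := by
        rw [hb, mul_one]
    _ = ((-1 : ℝ) ^ (a - b) * (-1 : ℝ) ^ b) * (-1 : ℝ) ^ b := by ring
    _ = (-1 : ℝ) ^ a * (-1 : ℝ) ^ b := by rw [← pow_add]; congr 2; omega

lemma key_term (n k j : ℕ) (hj : j < k + 2) :
    (-1 : ℝ) ^ (k + 1 - j) * ((k+1).choose j) * (j : ℝ) ^ (n+1)
      = (k+1 : ℝ) * ((-1 : ℝ) ^ (k + 1 - j) * ((k+1).choose j) * (j : ℝ) ^ n)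
        + (k+1 : ℝ) * ((-1 : ℝ) ^ (k - j) * (k.choose j) * (j : ℝ) ^ n) := by
  rcases Nat.eq_zero_or_pos j with rfl | hj0
  · rcases Nat.eq_zero_or_pos n with rfl | hn0
    · have h1 : k + 1 - 0 = (k - 0) + 1 := by omega
      simp [h1, pow_succ]
    · simp [Nat.pos_iff_ne_zero.mp hn0, zero_pow]
  · rcases Nat.lt_or_ge j (k+1) with hjk | hjk
    · -- 1 ≤ j ≤ k
      obtain ⟨j', rfl⟩ : ∃ j', j = j' + 1 := ⟨j - 1, by omega⟩
      have hpas : (((k+1).choose (j'+1) : ℕ) : ℝ) = (k.choose j' : ℝ) + (k.choose (j'+1) : ℝ) := by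
        rw [Nat.choose_succ_succ]; push_cast; ring
      have hjc : ((j' : ℝ) + 1) * ((k+1).choose (j'+1)) = (k+1 : ℝ) * (k.choose j') := by
        have := Nat.add_one_mul_choose_eq k j'
        have := congrArg (fun t : ℕ => (t : ℝ)) this
        push_cast at this
        linarith [this]
      have hsign2 : (-1 : ℝ) ^ (k - (j'+1)) = -(-1 : ℝ) ^ (k - j') := by
        have h : k - j' = (k - (j'+1)) + 1 := by omega
        rw [h, pow_succ]; ring
      have hjpow : ((j'+1 : ℕ) : ℝ) ^ (n+1) = ((j'+1 : ℕ) : ℝ) * ((j'+1 : ℕ) : ℝ) ^ n := by ring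
      rw [Nat.succ_sub_succ, hjpow, hsign2]
      push_cast
      push_cast at hjc
      linear_combination ((-1 : ℝ) ^ (k - j') * ((j' : ℝ)+1) ^ n) * hjc
        - ((k+1 : ℝ) * (-1 : ℝ) ^ (k - j') * ((j' : ℝ)+1) ^ n) * hpas
    · -- j = k+1
      have hj1 : j = k + 1 := by omega
      subst hj1
      have h0 : k - (k+1) = 0 := by omega
      have h1 : k + 1 - (k+1) = 0 := by omega
      simp [h0, h1, Nat.choose_succ_self]
      ring

lemma ssum_rec (n k : ℕ) :
    ssum (n+1) (k+1) = (k+1 : ℝ) * ssum n (k+1) + (k+1 : ℝ) * ssum n k := by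
  have hB : (k+1 : ℝ) * ssum n k
      = ∑ j ∈ Finset.range (k+2), (k+1 : ℝ) * ((-1 : ℝ) ^ (k - j) * (k.choose j) * (j : ℝ) ^ n) := by
    rw [Finset.sum_range_succ]
    simp [ssum, Nat.choose_succ_self, Finset.mul_sum]
  have hA : (k+1 : ℝ) * ssum n (k+1)
      = ∑ j ∈ Finset.range (k+2), (k+1 : ℝ) * ((-1 : ℝ) ^ (k+1 - j) * ((k+1).choose j) * (j : ℝ) ^ n) := by
    simp [ssum, Finset.mul_sum]
  rw [hA, hB, ← Finset.sum_add_distrib]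
  exact Finset.sum_congr rfl fun j hj => key_term n k j (Finset.mem_range.mp hj)

lemma stirling2_rec (n k : ℕ) :
    stirling2 (n+1) (k+1) = (k+1 : ℝ) * stirling2 n (k+1) + stirling2 n k := by
  rw [stirling2_eq, stirling2_eq, stirling2_eq, ssum_rec]
  have hk' : (k.factorial : ℝ) ≠ 0 := by positivity
  have hfac : (((k+1).factorial : ℕ) : ℝ) = (k+1 : ℝ) * (k.factorial : ℝ) := by
    rw [Nat.factorial_succ]; push_cast; ring
  field_simp [hfac]
  rw [hfac]
  ring

lemma stirling2_zero_succ (n : ℕ) : stirling2 (n+1) 0 = 0 := by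
  simp [stirling2]

lemma stirling2_zero_zero : stirling2 0 0 = 1 := by
  norm_num [stirling2]

lemma stirling2_succ_zero (k : ℕ) : stirling2 0 (k+1) = 0 := by
  rw [stirling2_eq]
  have h0 : ssum 0 (k+1) = 0 := by
    unfold ssum
    have h : ∀ j ∈ Finset.range (k+2), (-1 : ℝ) ^ (k+1-j) * (((k+1).choose j : ℕ) : ℝ) * (j:ℝ)^0
        = (-1 : ℝ)^(k+1) * ((-1 : ℝ)^j * (((k+1).choose j : ℕ) : ℝ)) := by
      intro j hj
      have hj' : j ≤ k + 1 := by
        have := Finset.mem_range.mp hj; omega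
      rw [neg_one_pow_sub (k+1) j hj', pow_zero]
      ring
    rw [Finset.sum_congr rfl h, ← Finset.mul_sum]
    have h1 := Int.alternating_sum_range_choose_of_ne (n := k+1) (by omega)
    have hcast : ∑ j ∈ Finset.range (k+2), ((-1 : ℝ))^j * (((k+1).choose j : ℕ) : ℝ) = 0 := by
      have h2 := congrArg (fun z : ℤ => (z : ℝ)) h1
      push_cast at h2
      convert h2 using 2
    rw [hcast, mul_zero]
  rw [h0, mul_zero]

lemma stirling2_of_lt : ∀ n k : ℕ, n < k → stirling2 n k = 0 := by
  intro n
  induction n with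
  | zero =>
    intro k hk
    rcases k with _ | k
    · omega
    · exact stirling2_succ_zero k
  | succ n ih =>
    intro k hk
    rcases k with _ | k
    · omega
    · rw [stirling2_rec, ih (k+1) (by omega), ih k (by omega)]
      ring

lemma stirling2_self : ∀ n : ℕ, stirling2 n n = 1 := by
  intro n
  induction n with
  | zero => exact stirling2_zero_zero
  | succ n ih =>
    rw [stirling2_rec, ih, stirling2_of_lt n (n+1) (by omega)]
    ring

noncomputable def Vp (m : ℕ) : ℕ → Polynomial ℝ :=
  fun k => ∏ i ∈ Finset.range k, (Polynomial.X - Polynomial.C ((m : ℝ) * i))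

lemma Vp_zero (m : ℕ) : Vp m 0 = 1 := by simp [Vp]

lemma Vp_succ (m k : ℕ) : Vp m (k+1) = Vp m k * (X - C ((m:ℝ) * k)) :=
  Finset.prod_range_succ _ _

lemma Vp_mul_X (m k : ℕ) : Vp m k * X = Vp m (k+1) + C ((m:ℝ) * k) * Vp m k := by
  rw [Vp_succ]; ring

lemma X_pow_eq (m : ℕ) : ∀ n : ℕ, (Polynomial.X : Polynomial ℝ) ^ n
    = ∑ k ∈ Finset.range (n+1), C (stirling2 n k * (m : ℝ) ^ (n - k)) * Vp m k := by
  intro n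
  induction n with
  | zero => simp [Vp_zero, stirling2_zero_zero]
  | succ n ih =>
    have expand : (Polynomial.X : Polynomial ℝ) ^ (n+1)
        = ∑ k ∈ Finset.range (n+1), (C (stirling2 n k * (m : ℝ) ^ (n - k)) * Vp m (k+1)
            + C (stirling2 n k * (m : ℝ) ^ (n - k) * ((m:ℝ) * k)) * Vp m k) := by
      calc (Polynomial.X : Polynomial ℝ) ^ (n+1) = (X : Polynomial ℝ)^n * X := by ring
        _ = ∑ k ∈ Finset.range (n+1), C (stirling2 n k * (m : ℝ) ^ (n - k)) * (Vp m k * X) := by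
            rw [ih, Finset.sum_mul]; exact Finset.sum_congr rfl fun k _ => by ring
        _ = _ := by
            refine Finset.sum_congr rfl fun k _ => ?_
            rw [Vp_mul_X, mul_add]
            congr 1
            rw [← mul_assoc, ← C_mul]
    rw [expand, Finset.sum_add_distrib]
    -- second piece
    have hsecond : ∑ k ∈ Finset.range (n+1), C (stirling2 n k * (m : ℝ) ^ (n - k) * ((m:ℝ) * k)) * Vp m k
        = ∑ k ∈ Finset.range (n+1), C ((k+1 : ℝ) * stirling2 n (k+1) * (m : ℝ) ^ (n - k)) * Vp m (k+1) := by
      rw [Finset.sum_range_succ' (fun k => C (stirling2 n k * (m : ℝ) ^ (n - k) * ((m:ℝ) * k)) * Vp m k) n]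
      simp only [Nat.cast_zero, mul_zero, zero_mul, map_zero, add_zero]
      rw [Finset.sum_range_succ
        (fun k => C ((k+1 : ℝ) * stirling2 n (k+1) * (m : ℝ) ^ (n - k)) * Vp m (k+1)) n]
      rw [stirling2_of_lt n (n+1) (by omega)]
      simp only [mul_zero, zero_mul, map_zero, add_zero, mul_one, mul_zero]
      refine Finset.sum_congr rfl fun k hk => ?_
      have hk' : k < n := Finset.mem_range.mp hk
      have hpow : (m : ℝ) ^ (n - (k+1)) * (m : ℝ) = (m : ℝ) ^ (n - k) := by
        rw [← pow_succ]
        congr 1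
        omega
      congr 1
      rw [← hpow]
      push_cast
      ring
    rw [hsecond, ← Finset.sum_add_distrib]
    -- target
    rw [Finset.sum_range_succ' (fun k => C (stirling2 (n+1) k * (m : ℝ) ^ (n + 1 - k)) * Vp m k) (n+1)]
    rw [stirling2_zero_succ]
    simp only [zero_mul, map_zero, add_zero]
    refine (Finset.sum_congr rfl fun k _ => ?_).symm
    rw [Nat.succ_sub_succ, stirling2_rec, add_mul, C_add, add_mul]
    ring

lemma L_Vp (m : ℕ) (x : ℝ) (L : Polynomial ℝ →ₗ[ℝ] ℝ)
    (hL : ∀ n : ℕ, L (Polynomial.X ^ n) = geomPolyMod n x m) :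
    ∀ k : ℕ, L (Vp m k) = ((k+1).factorial : ℝ) * x ^ k := by
  intro k
  induction k using Nat.strong_induction_on with
  | _ k ih =>
    have hexp := congrArg L (X_pow_eq m k)
    rw [hL k, map_sum] at hexp
    simp only [← smul_eq_C_mul, map_smul, smul_eq_mul] at hexp
    rw [Finset.sum_range_succ] at hexp
    have hrepl : ∑ j ∈ Finset.range k, stirling2 k j * (m:ℝ)^(k-j) * L (Vp m j)
        = ∑ j ∈ Finset.range k, ((j+1).factorial : ℝ) * stirling2 k j * x ^ j * (m:ℝ)^(k-j) := by
      refine Finset.sum_congr rfl fun j hj => ?_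
      rw [ih j (Finset.mem_range.mp hj)]
      ring
    rw [hrepl] at hexp
    unfold geomPolyMod at hexp
    rw [Finset.sum_range_succ] at hexp
    have hss := stirling2_self k
    rw [hss] at hexp
    simp only [Nat.sub_self, pow_zero, mul_one, one_mul] at hexp
    linarith

lemma L_Vp_OP (m : ℕ) (x : ℝ) (L : Polynomial ℝ →ₗ[ℝ] ℝ)
    (hL : ∀ n : ℕ, L (Polynomial.X ^ n) = geomPolyMod n x m) :
    ∀ n k : ℕ, L (Vp m k * geomPolyModOP m x n)
      = ((k+1).factorial : ℝ) * (k.descFactorial n : ℝ) * x ^ k * (x + (m:ℝ)) ^ n := by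
  have hVp := L_Vp m x L hL
  have key : ∀ n : ℕ,
      (∀ k : ℕ, L (Vp m k * geomPolyModOP m x n)
        = ((k+1).factorial : ℝ) * (k.descFactorial n : ℝ) * x ^ k * (x + (m:ℝ)) ^ n)
      ∧ (∀ k : ℕ, L (Vp m k * geomPolyModOP m x (n+1))
        = ((k+1).factorial : ℝ) * (k.descFactorial (n+1) : ℝ) * x ^ k * (x + (m:ℝ)) ^ (n+1)) := by
    intro n
    induction n with
    | zero =>
      constructor
      · intro k
        show L (Vp m k * 1) = _
        rw [mul_one, hVp k]
        simp
      · intro k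
        show L (Vp m k * (X - C (2*x))) = _
        have hpoly : Vp m k * (X - C (2*x))
            = Vp m (k+1) + ((m:ℝ)*k - 2*x) • Vp m k := by
          rw [smul_eq_C_mul, mul_sub, Vp_mul_X, map_sub, C_mul]
          push_cast
          ring
        rw [hpoly, map_add, map_smul, hVp, hVp, smul_eq_mul]
        rw [Nat.descFactorial_succ, Nat.descFactorial_zero]
        have hfac : ((k+2).factorial : ℝ) = ((k:ℝ)+2) * ((k+1).factorial : ℝ) := by
          rw [show k+2 = (k+1)+1 from rfl, Nat.factorial_succ]
          push_cast
          ring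
        rw [show k+1+1 = k+2 from rfl, hfac]
        push_cast [Nat.sub_zero]
        ring
    | succ n ih =>
      obtain ⟨ih0, ih1⟩ := ih
      refine ⟨ih1, fun k => ?_⟩
      show L (Vp m k * ((X - C (2 * ((n : ℝ) + 2) * x + ((n : ℝ) + 1) * m)) *
          geomPolyModOP m x (n + 1) -
        C (((n : ℝ) + 1) * ((n : ℝ) + 2) * x * (x + m)) * geomPolyModOP m x n)) = _
      have hpoly : Vp m k * ((X - C (2 * ((n : ℝ) + 2) * x + ((n : ℝ) + 1) * m)) *
            geomPolyModOP m x (n + 1) -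
          C (((n : ℝ) + 1) * ((n : ℝ) + 2) * x * (x + m)) * geomPolyModOP m x n)
          = Vp m (k+1) * geomPolyModOP m x (n+1)
            + ((m:ℝ)*k - (2 * ((n : ℝ) + 2) * x + ((n : ℝ) + 1) * m)) •
                (Vp m k * geomPolyModOP m x (n+1))
            - (((n : ℝ) + 1) * ((n : ℝ) + 2) * x * (x + m)) •
                (Vp m k * geomPolyModOP m x n) := by
        rw [smul_eq_C_mul, smul_eq_C_mul]
        have hX : Vp m k * X = Vp m (k+1) + C ((m:ℝ) * k) * Vp m k := Vp_mul_X m k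
        calc Vp m k * _
            = (Vp m k * X) * geomPolyModOP m x (n+1)
              - C (2 * ((n : ℝ) + 2) * x + ((n : ℝ) + 1) * m) * (Vp m k * geomPolyModOP m x (n+1))
              - C (((n : ℝ) + 1) * ((n : ℝ) + 2) * x * (x + m)) * (Vp m k * geomPolyModOP m x n) := by
                ring
          _ = _ := by
                rw [hX, map_sub, C_mul]
                push_cast
                ring
      rw [hpoly, map_sub, map_add, map_smul, map_smul, ih1 k, ih1 (k+1), ih0 k, smul_eq_mul, smul_eq_mul]
      -- now pure algebra with descFactorials
      rcases Nat.lt_or_ge k n with hk | hk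
      · -- k < n : everything vanishes
        have d1 : k.descFactorial n = 0 := Nat.descFactorial_eq_zero_iff_lt.mpr hk
        have d2 : k.descFactorial (n+1) = 0 := Nat.descFactorial_eq_zero_iff_lt.mpr (by omega)
        have d3 : k.descFactorial (n+1+1) = 0 := Nat.descFactorial_eq_zero_iff_lt.mpr (by omega)
        have d4 : (k+1).descFactorial (n+1) = 0 := Nat.descFactorial_eq_zero_iff_lt.mpr (by omega)
        rw [d1, d2, d3, d4]
        push_cast
        ring
      · rcases Nat.lt_or_ge k (n+2) with hk2 | hk2
        · rcases Nat.eq_or_lt_of_le hk with hkn | hkn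
          · -- k = n
            subst hkn
            have d1 : n.descFactorial n = n.factorial := Nat.descFactorial_self n
            have d2 : n.descFactorial (n+1) = 0 := Nat.descFactorial_eq_zero_iff_lt.mpr (by omega)
            have d3 : n.descFactorial (n+1+1) = 0 := Nat.descFactorial_eq_zero_iff_lt.mpr (by omega)
            have d4 : (n+1).descFactorial (n+1) = (n+1).factorial := Nat.descFactorial_self (n+1)
            rw [d1, d2, d3, d4]
            have hfacs : (((n+1)+1).factorial : ℝ) = ((n:ℝ)+2) * ((n+1).factorial : ℝ) := by
              rw [Nat.factorial_succ]; push_cast; ring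
            have hfacs2 : ((n+1).factorial : ℝ) = ((n:ℝ)+1) * (n.factorial : ℝ) := by
              rw [Nat.factorial_succ]; push_cast; ring
            rw [hfacs, hfacs2]
            push_cast
            ring
          · -- k = n+1
            have hkn1 : k = n + 1 := by omega
            subst hkn1
            have d2 : (n+1).descFactorial (n+1) = (n+1).factorial := Nat.descFactorial_self (n+1)
            have d1 : (n+1).descFactorial n = (n+1).factorial := by
              have h := Nat.descFactorial_self (n+1)
              rwa [Nat.descFactorial_succ, show n+1-n = 1 by omega, one_mul] at h
            have d3 : (n+1).descFactorial (n+1+1) = 0 :=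
              Nat.descFactorial_eq_zero_iff_lt.mpr (by omega)
            have d4 : (n+1+1).descFactorial (n+1) = (n+2) * (n+1).factorial := by
              rw [Nat.succ_descFactorial_succ, d1]
            rw [d1, d2, d3, d4]
            have hfacs : (((n+1)+1+1).factorial : ℝ) = ((n:ℝ)+3) * (((n+1)+1).factorial : ℝ) := by
              rw [Nat.factorial_succ]; push_cast; ring
            have hfacs2 : (((n+1)+1).factorial : ℝ) = ((n:ℝ)+2) * ((n+1).factorial : ℝ) := by
              rw [Nat.factorial_succ]; push_cast; ring
            rw [hfacs, hfacs2]
            push_cast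
            ring
        · -- k ≥ n+2
          have d1 : (k.descFactorial (n+1) : ℝ) = ((k:ℝ) - n) * (k.descFactorial n : ℝ) := by
            rw [Nat.descFactorial_succ]
            push_cast [Nat.cast_sub (by omega : n ≤ k)]
            ring
          have d3 : (k.descFactorial (n+1+1) : ℝ)
              = ((k:ℝ) - (n+1)) * ((k:ℝ) - n) * (k.descFactorial n : ℝ) := by
            rw [Nat.descFactorial_succ, Nat.descFactorial_succ]
            push_cast [Nat.cast_sub (by omega : n+1 ≤ k), Nat.cast_sub (by omega : n ≤ k)]
            ring
          have d4 : ((k+1).descFactorial (n+1) : ℝ) = ((k:ℝ)+1) * (k.descFactorial n : ℝ) := by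
            rw [Nat.succ_descFactorial_succ]
            push_cast
            ring
          have hfacs : (((k+1)+1).factorial : ℝ) = ((k:ℝ)+2) * ((k+1).factorial : ℝ) := by
            rw [Nat.factorial_succ]; push_cast; ring
          rw [d1, d3, d4, hfacs]
          push_cast
          ring
  intro n k
  exact (key n).1 k

lemma L_Xpow_OP (m : ℕ) (x : ℝ) (L : Polynomial ℝ →ₗ[ℝ] ℝ)
    (hL : ∀ n : ℕ, L (Polynomial.X ^ n) = geomPolyMod n x m) :
    ∀ n k : ℕ, k < n → L ((X : Polynomial ℝ) ^ k * geomPolyModOP m x n) = 0 := by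
  intro n k hkn
  have hexp : (X : Polynomial ℝ) ^ k * geomPolyModOP m x n
      = ∑ j ∈ Finset.range (k+1), (stirling2 k j * (m : ℝ) ^ (k - j)) • (Vp m j * geomPolyModOP m x n) := by
    rw [X_pow_eq m k, Finset.sum_mul]
    exact Finset.sum_congr rfl fun j _ => by rw [smul_eq_C_mul]; ring
  rw [hexp, map_sum]
  refine Finset.sum_eq_zero fun j hj => ?_
  rw [map_smul, L_Vp_OP m x L hL n j, smul_eq_mul]
  have hj' : j < n := by
    have := Finset.mem_range.mp hj; omega
  rw [Nat.descFactorial_eq_zero_iff_lt.mpr hj']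
  push_cast
  ring

lemma OP_natDegree_le (m : ℕ) (x : ℝ) : ∀ n : ℕ, (geomPolyModOP m x n).natDegree ≤ n := by
  have key : ∀ n : ℕ, (geomPolyModOP m x n).natDegree ≤ n ∧
      (geomPolyModOP m x (n+1)).natDegree ≤ n+1 := by
    intro n
    induction n with
    | zero =>
      constructor
      · show (1 : Polynomial ℝ).natDegree ≤ 0; simp
      · show (X - C (2*x) : Polynomial ℝ).natDegree ≤ 1
        exact natDegree_X_sub_C_le _
    | succ n ih =>
      obtain ⟨ih0, ih1⟩ := ih
      refine ⟨ih1, ?_⟩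
      show ((X - C (2 * ((n : ℝ) + 2) * x + ((n : ℝ) + 1) * m)) * geomPolyModOP m x (n + 1) -
        C (((n : ℝ) + 1) * ((n : ℝ) + 2) * x * (x + m)) * geomPolyModOP m x n).natDegree ≤ n+2
      refine le_trans (natDegree_sub_le _ _) ?_
      refine max_le ?_ ?_
      · refine le_trans (natDegree_mul_le) ?_
        have h1 : (X - C (2 * ((n : ℝ) + 2) * x + ((n : ℝ) + 1) * m)).natDegree ≤ 1 :=
          natDegree_X_sub_C_le _
        omega
      · refine le_trans (natDegree_mul_le) ?_
        have h2 : (C (((n : ℝ) + 1) * ((n : ℝ) + 2) * x * (x + m))).natDegree = 0 :=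
          natDegree_C _
        omega
  exact fun n => (key n).1

lemma L_poly_OP (m : ℕ) (x : ℝ) (L : Polynomial ℝ →ₗ[ℝ] ℝ)
    (hL : ∀ n : ℕ, L (Polynomial.X ^ n) = geomPolyMod n x m)
    (P : Polynomial ℝ) (n : ℕ) (hP : P.natDegree < n) :
    L (P * geomPolyModOP m x n) = 0 := by
  have hexp : P * geomPolyModOP m x n
      = ∑ k ∈ Finset.range (P.natDegree + 1), (P.coeff k) • ((X : Polynomial ℝ)^k * geomPolyModOP m x n) := by
    conv_lhs => rw [P.as_sum_range]
    rw [Finset.sum_mul]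
    refine Finset.sum_congr rfl fun k _ => ?_
    rw [← C_mul_X_pow_eq_monomial, smul_eq_C_mul, mul_assoc]
  rw [hexp, map_sum]
  refine Finset.sum_eq_zero fun k hk => ?_
  rw [map_smul, L_Xpow_OP m x L hL n k (by have := Finset.mem_range.mp hk; omega), smul_eq_mul, mul_zero]

/-- The modified bivariate geometric polynomials `ω̃_n(x,m)` are the moments of the
orthogonal family `R_n`. -/
theorem geomPolyMod_moments (m : ℕ) (hm : 0 < m) (x : ℝ)
    (L : Polynomial ℝ →ₗ[ℝ] ℝ)
    (hL : ∀ n : ℕ, L (Polynomial.X ^ n) = geomPolyMod n x m) :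
    ∀ i j : ℕ, i ≠ j → L (geomPolyModOP m x i * geomPolyModOP m x j) = 0 := by
  intro i j hij
  -- wlog i < j
  rcases Nat.lt_or_ge i j with h | h
  · have hd : (geomPolyModOP m x i).natDegree < j :=
      lt_of_le_of_lt (OP_natDegree_le m x i) h
    exact L_poly_OP m x L hL _ j hd
  · have h' : j < i := by omega
    have hd : (geomPolyModOP m x j).natDegree < i :=
      lt_of_le_of_lt (OP_natDegree_le m x j) h'
    rw [mul_comm]
    exact L_poly_OP m x L hL _ i hd
end

section
/- Let m be a positive integer and x a real number. For every n ≥ 0, the Hankel determinant of the modified bivariate geometric polynomials satisfies det( (ω̃_{i+j}(x,m))_{0 ≤ i,j ≤ n} ) = (x(x+m))^{C(n+1,2)} · (n+1)! · ∏_{k=0}^n (k!)^2, where C(n+1,2) = n(n+1)/2. -/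
open Finset

/-- `Aa p k = k! · S(p,k)` as an alternating sum with sign `(-1)^(k+j)`. -/
noncomputable def Aa (p k : ℕ) : ℝ :=
  ∑ j ∈ Finset.range (k + 1), (-1 : ℝ) ^ (k + j) * (k.choose j) * (j : ℝ) ^ p

lemma fact_stirling (p k : ℕ) : (k.factorial : ℝ) * stirling2 p k = Aa p k := by
  unfold stirling2 Aa
  rw [← mul_assoc, mul_one_div, div_self (by positivity : (k.factorial:ℝ) ≠ 0), one_mul]
  refine Finset.sum_congr rfl fun j hj => ?_
  have hjk : j ≤ k := by simpa [Nat.lt_succ_iff] using hj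
  have : (-1:ℝ) ^ (k - j) = (-1) ^ (k + j) := by
    have h : k + j = (k - j) + 2 * j := by omega
    rw [h, pow_add, pow_mul, neg_one_sq, one_pow, mul_one]
  rw [this]

lemma Aa_zero (p : ℕ) : Aa p 0 = (0:ℝ) ^ p := by
  simp [Aa]


lemma Aa_split (q k : ℕ) : Aa q (k+1)
    = (∑ j ∈ Finset.range (k+1), (-1:ℝ)^(k+j) * (((k+1).choose (j+1) : ℕ)) * ((j:ℝ)+1)^q)
      + (-1:ℝ)^(k+1) * (0:ℝ)^q := by
  unfold Aa
  rw [Finset.sum_range_succ' (f := fun j => (-1:ℝ)^(k+1+j) * (((k+1).choose j : ℕ)) * (j:ℝ)^q)]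
  have hsgn : ∀ j : ℕ, (-1:ℝ)^(k+1+(j+1)) = (-1:ℝ)^(k+j) := by
    intro j
    rw [show k+1+(j+1) = (k+j) + 2 by omega, pow_add]; norm_num
  simp only [hsgn, Nat.choose_zero_right, Nat.cast_one, Nat.cast_zero, add_zero, mul_one]
  push_cast
  ring_nf

lemma Aa_key (q k : ℕ) : Aa q (k+1) + Aa q k
    = ∑ j ∈ Finset.range (k+1), (-1:ℝ)^(k+j) * (k.choose j) * ((j:ℝ)+1)^q := by
  have hsgn : ∀ j : ℕ, (-1:ℝ)^(k+1+(j+1)) = (-1:ℝ)^(k+j) := by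
    intro j
    rw [show k+1+(j+1) = (k+j) + 2 by omega, pow_add]; norm_num
  have hsgn2 : ∀ j : ℕ, (-1:ℝ)^(k+(j+1)) = -(-1:ℝ)^(k+j) := by
    intro j
    rw [show k+(j+1) = (k+j) + 1 by omega, pow_add]; norm_num
  have split1 := Aa_split q k
  have tele : ∑ j ∈ Finset.range (k+1), (-1:ℝ)^(k+j) * ((k.choose (j+1) : ℕ)) * ((j:ℝ)+1)^q
      = -(Aa q k) + (-1:ℝ)^k * (0:ℝ)^q := by
    have h2 : ∑ j ∈ Finset.range (k+2), (-1:ℝ)^(k+j) * ((k.choose j : ℕ)) * (j:ℝ)^q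
        = (∑ j ∈ Finset.range (k+1), (-1:ℝ)^(k+(j+1)) * ((k.choose (j+1) : ℕ)) * (((j:ℕ)+1:ℕ):ℝ)^q)
          + (-1:ℝ)^(k+0) * ((k.choose 0 : ℕ)) * ((0:ℕ):ℝ)^q :=
      Finset.sum_range_succ' _ _
    have h3 : ∑ j ∈ Finset.range (k+2), (-1:ℝ)^(k+j) * ((k.choose j : ℕ)) * (j:ℝ)^q
        = Aa q k + (-1:ℝ)^(k+(k+1)) * ((k.choose (k+1) : ℕ)) * (((k:ℕ)+1:ℕ):ℝ)^q :=
      Finset.sum_range_succ _ _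
    rw [Nat.choose_succ_self] at h3
    simp only [Nat.cast_zero, Nat.cast_ofNat, Nat.choose_zero_right, Nat.cast_one, mul_one,
      add_zero, Nat.cast_zero, zero_mul, mul_zero] at h3
    have h4 := h2.symm.trans h3
    simp only [hsgn2, Nat.cast_zero, Nat.choose_zero_right, Nat.cast_one, add_zero, mul_one] at h4
    have : ∑ j ∈ Finset.range (k+1), -(-1:ℝ)^(k+j) * ((k.choose (j+1) : ℕ)) * (((j:ℕ)+1:ℕ):ℝ)^q
        = ∑ j ∈ Finset.range (k+1), -((-1:ℝ)^(k+j) * ((k.choose (j+1) : ℕ)) * ((j:ℝ)+1)^q) := by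
      refine Finset.sum_congr rfl fun j _ => ?_
      push_cast; ring
    rw [this] at h4
    rw [Finset.sum_neg_distrib] at h4
    linarith [h4]
  have pas : ∀ j : ℕ, (((k+1).choose (j+1) : ℕ) : ℝ) = ((k.choose j : ℕ) : ℝ) + ((k.choose (j+1) : ℕ) : ℝ) := by
    intro j
    rw [Nat.choose_succ_succ]; push_cast; ring
  rw [split1]
  have expand : ∑ j ∈ Finset.range (k+1), (-1:ℝ)^(k+j) * (((k+1).choose (j+1) : ℕ)) * ((j:ℝ)+1)^q
      = (∑ j ∈ Finset.range (k+1), (-1:ℝ)^(k+j) * ((k.choose j : ℕ)) * ((j:ℝ)+1)^q)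
        + ∑ j ∈ Finset.range (k+1), (-1:ℝ)^(k+j) * ((k.choose (j+1) : ℕ)) * ((j:ℝ)+1)^q := by
    rw [← Finset.sum_add_distrib]
    refine Finset.sum_congr rfl fun j _ => ?_
    rw [pas j]; ring
  rw [expand, tele]
  have : (-1:ℝ)^(k+1) = -(-1:ℝ)^k := by rw [pow_add]; norm_num
  rw [this]
  ring

lemma Aa_rec (p k : ℕ) : Aa (p+1) (k+1) = ((k:ℝ)+1) * (Aa p (k+1) + Aa p k) := by
  rw [Aa_key, Aa_split]
  rw [zero_pow (Nat.succ_ne_zero p), mul_zero, add_zero, Finset.mul_sum]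
  refine Finset.sum_congr rfl fun j _ => ?_
  have hc : (((k+1).choose (j+1) : ℕ) : ℝ) * ((j:ℝ)+1) = ((k:ℝ)+1) * ((k.choose j : ℕ) : ℝ) := by
    have h := Nat.add_one_mul_choose_eq k j
    have h2 : ((k+1) * k.choose j : ℕ) = ((k+1).choose (j+1) * (j+1) : ℕ) := h
    have := congrArg (fun t : ℕ => (t : ℝ)) h2
    push_cast at this
    linarith
  calc (-1:ℝ)^(k+j) * (((k+1).choose (j+1) : ℕ)) * ((j:ℝ)+1)^(p+1)
      = (-1:ℝ)^(k+j) * ((((k+1).choose (j+1) : ℕ)) * ((j:ℝ)+1)) * ((j:ℝ)+1)^p := by ring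
    _ = (-1:ℝ)^(k+j) * (((k:ℝ)+1) * ((k.choose j : ℕ))) * ((j:ℝ)+1)^p := by rw [hc]
    _ = ((k:ℝ)+1) * ((-1:ℝ)^(k+j) * ((k.choose j : ℕ)) * ((j:ℝ)+1)^p) := by ring

lemma Aa_vanish : ∀ p k : ℕ, p < k → Aa p k = 0 := by
  intro p
  induction p with
  | zero =>
    intro k hk
    obtain ⟨k, rfl⟩ : ∃ k', k = k' + 1 := ⟨k - 1, by omega⟩
    unfold Aa
    have h1 : ∀ j ∈ Finset.range (k+2), (-1:ℝ)^(k+1+j) * (((k+1).choose j : ℕ)) * (j:ℝ)^(0:ℕ)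
        = (-1:ℝ)^(k+1) * ((-1:ℝ)^j * (((k+1).choose j : ℕ))) := by
      intro j _
      rw [pow_add, pow_zero]; ring
    rw [Finset.sum_congr rfl h1, ← Finset.mul_sum]
    have h2 : ∑ j ∈ Finset.range (k+2), (-1:ℝ)^j * (((k+1).choose j : ℕ)) = 0 := by
      have h := Int.alternating_sum_range_choose (n := k+1)
      rw [if_neg (Nat.succ_ne_zero k)] at h
      have h3 := congrArg (fun t : ℤ => (t : ℝ)) h
      push_cast at h3
      convert h3 using 2
    rw [h2, mul_zero]
  | succ p ih =>
    intro k hk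
    obtain ⟨k, rfl⟩ : ∃ k', k = k' + 1 := ⟨k - 1, by omega⟩
    rw [Aa_rec, ih (k+1) (by omega), ih k (by omega)]
    ring

lemma Aa_diag (p : ℕ) : Aa p p = (p.factorial : ℝ) := by
  induction p with
  | zero => simp [Aa]
  | succ p ih =>
    rw [Aa_rec, Aa_vanish p (p+1) (by omega), ih]
    push_cast [Nat.factorial_succ]
    ring

noncomputable def Bb (x : ℝ) (p i : ℕ) : ℝ :=
  ∑ t ∈ Finset.range (p+1), Aa p (i+t) * (((i+t+1).choose (i+1) : ℕ) : ℝ) * x^t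

lemma Bb_vanish (x : ℝ) {p i : ℕ} (h : p < i) : Bb x p i = 0 := by
  unfold Bb
  refine Finset.sum_eq_zero fun t _ => ?_
  rw [Aa_vanish p (i+t) (by omega), zero_mul, zero_mul]

lemma Bb_diag (x : ℝ) (p : ℕ) : Bb x p p = (p.factorial : ℝ) := by
  unfold Bb
  rw [Finset.sum_eq_single 0]
  · simp [Aa_diag]
  · intro t _ ht
    rw [Aa_vanish p (p+t) (by omega), zero_mul, zero_mul]
  · intro h
    simp at h

lemma two_choose2 : ∀ n : ℕ, 2 * ((n+1).choose 2) = (n+1)*n := by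
  intro n
  rw [Nat.choose_two_right, Nat.succ_sub_one, mul_comm (n+1) n,
    Nat.mul_div_cancel' (Nat.even_mul_succ_self n).two_dvd]

lemma shift_sum {n : ℕ} (f : ℕ → ℝ) (h0 : f 0 = 0) (hn : f n = 0) :
    ∑ t ∈ Finset.range n, f (t+1) = ∑ t ∈ Finset.range n, f t := by
  cases n with
  | zero => simp
  | succ n =>
    have h1 := Finset.sum_range_succ' f (n+1)
    have h2 := Finset.sum_range_succ f (n+1)
    rw [h0] at h1
    rw [hn] at h2
    rw [add_zero] at h1 h2
    rw [← h1, h2]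

lemma Bb_rec0 (x : ℝ) (p : ℕ) :
    Bb x (p+1) 0 = 2*x*Bb x p 0 + 2*(x*(x+1))*Bb x p 1 := by
  have hL : Bb x (p+1) 0
      = ∑ t ∈ Finset.range (p+1), ((t:ℝ)+1)*((t:ℝ)+2)*(Aa p (t+1) + Aa p t) * x^(t+1) := by
    unfold Bb
    rw [Finset.sum_range_succ' (f := fun t => Aa (p+1) (0+t) * (((0+t+1).choose (0+1) : ℕ) : ℝ) * x^t)]
    simp only [Nat.zero_add, Aa_zero, zero_pow (Nat.succ_ne_zero p), zero_mul, add_zero,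
      Nat.choose_one_right]
    refine Finset.sum_congr rfl fun t _ => ?_
    rw [Aa_rec]
    push_cast
    ring
  have hR1 : 2*x*Bb x p 0 = ∑ t ∈ Finset.range (p+1), 2*((t:ℝ)+1) * Aa p t * x^(t+1) := by
    unfold Bb
    rw [Finset.mul_sum]
    refine Finset.sum_congr rfl fun t _ => ?_
    simp only [Nat.zero_add, Nat.choose_one_right]
    push_cast
    ring
  have hR2 : 2*(x*(x+1))*Bb x p 1
      = (∑ t ∈ Finset.range (p+1), 2*(((1+t+1).choose 2 : ℕ) : ℝ) * Aa p (t+1) * x^(t+2))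
        + ∑ t ∈ Finset.range (p+1), 2*(((1+t+1).choose 2 : ℕ) : ℝ) * Aa p (t+1) * x^(t+1) := by
    unfold Bb
    rw [Finset.mul_sum, ← Finset.sum_add_distrib]
    refine Finset.sum_congr rfl fun t _ => ?_
    push_cast
    ring
  have hshift : ∑ t ∈ Finset.range (p+1), 2*(((1+t+1).choose 2 : ℕ) : ℝ) * Aa p (t+1) * x^(t+2)
      = ∑ t ∈ Finset.range (p+1), 2*(((t+1).choose 2 : ℕ) : ℝ) * Aa p t * x^(t+1) := by
    have := shift_sum (n := p+1) (f := fun u => 2*(((u+1).choose 2 : ℕ) : ℝ) * Aa p u * x^(u+1))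
      (by simp) (by simp [Aa_vanish p (p+1) (Nat.lt_succ_self p)])
    rw [← this]
    refine Finset.sum_congr rfl fun t _ => ?_
    norm_num [show 1+t+1 = t+1+1 by omega]
  rw [hL, hR1, hR2, hshift, ← Finset.sum_add_distrib, ← Finset.sum_add_distrib]
  refine Finset.sum_congr rfl fun t _ => ?_
  have c1 : (((t+2).choose 2 : ℕ) : ℝ) * 2 = ((t:ℝ)+2)*((t:ℝ)+1) := by
    have := two_choose2 (t+1)
    have h2 := congrArg (fun z : ℕ => (z:ℝ)) this
    push_cast at h2
    push_cast
    linarith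
  have c2 : (((t+1).choose 2 : ℕ) : ℝ) * 2 = ((t:ℝ)+1)*(t:ℝ) := by
    have := two_choose2 t
    have h2 := congrArg (fun z : ℕ => (z:ℝ)) this
    push_cast at h2
    push_cast
    linarith
  rw [show 1+t+1 = t+2 by omega]
  linear_combination (-(Aa p t * x^(t+1))) * c2 + (-(Aa p (t+1) * x^(t+1))) * c1

lemma id1_nat (i t : ℕ) : (i+t+2).choose (i+3) * (i+3) = (i+t+2).choose (i+2) * t := by
  have h := Nat.choose_succ_right_eq (i+t+2) (i+2)
  rw [show i+t+2-(i+2) = t by omega] at h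
  exact h

lemma id2_real (i t : ℕ) :
    ((i:ℝ)+(t:ℝ)+1) * (((i+t+2).choose (i+2) : ℕ) : ℝ)
      = ((i:ℝ)+1) * (((i+t+1).choose (i+1) : ℕ) : ℝ)
        + 2*((i:ℝ)+2) * (((i+t+1).choose (i+2) : ℕ) : ℝ)
        + ((i:ℝ)+3) * (((i+t+1).choose (i+3) : ℕ) : ℝ) := by
  have f1 := congrArg (fun z : ℕ => (z:ℝ)) (Nat.add_one_mul_choose_eq (i+t) i)
  have f2 := congrArg (fun z : ℕ => (z:ℝ)) (Nat.add_one_mul_choose_eq (i+t) (i+1))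
  have f3 := congrArg (fun z : ℕ => (z:ℝ)) (Nat.add_one_mul_choose_eq (i+t) (i+2))
  have f4 := congrArg (fun z : ℕ => (z:ℝ)) (Nat.choose_succ_succ (i+t+1) (i+1))
  have f5 := congrArg (fun z : ℕ => (z:ℝ)) (Nat.choose_succ_succ (i+t) i)
  have f6 := congrArg (fun z : ℕ => (z:ℝ)) (Nat.choose_succ_succ (i+t) (i+1))
  simp only [Nat.succ_eq_add_one] at f1 f2 f3 f4 f5 f6
  push_cast at f1 f2 f3 f4 f5 f6
  rw [show i+t+1+1 = i+t+2 by omega] at f4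
  rw [show i+1+1 = i+2 by omega] at f4 f2 f6
  rw [show i+1+1+1 = i+3 by omega] at f3
  rw [show i+2+1 = i+3 by omega] at f3
  linear_combination ((i:ℝ)+(t:ℝ)+1)*f4 + ((i:ℝ)+(t:ℝ)+1)*f5 + ((i:ℝ)+(t:ℝ)+1)*f6
    + f1 + 2*f2 + f3

lemma Bb_rec (x : ℝ) (p i : ℕ) :
    Bb x (p+1) (i+1) = ((i:ℝ)+1)*Bb x p i + (((i:ℝ)+1) + 2*((i:ℝ)+2)*x)*Bb x p (i+1)
      + ((i:ℝ)+3)*(x*(x+1))*Bb x p (i+2) := by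
  have hL : Bb x (p+1) (i+1)
      = ∑ t ∈ Finset.range (p+1), ((i:ℝ)+(t:ℝ)+1) * (Aa p (i+t+1) + Aa p (i+t))
          * (((i+t+2).choose (i+2) : ℕ) : ℝ) * x^t := by
    unfold Bb
    rw [Finset.sum_range_succ]
    rw [show i+1+(p+1) = (i+p+1)+1 by omega, Aa_rec,
      Aa_vanish p (i+p+1+1) (by omega), Aa_vanish p (i+p+1) (by omega)]
    simp only [add_zero, mul_zero, zero_mul]
    refine Finset.sum_congr rfl fun t _ => ?_
    rw [show i+1+t = (i+t)+1 by omega, Aa_rec]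
    rw [show (i+t)+1+1 = i+t+2 by omega, show i+1+1 = i+2 by omega]
    push_cast
    ring
  have hT0 : ((i:ℝ)+1)*Bb x p i
      = ∑ t ∈ Finset.range (p+1), ((i:ℝ)+1) * Aa p (i+t) * (((i+t+1).choose (i+1) : ℕ) : ℝ) * x^t := by
    unfold Bb
    rw [Finset.mul_sum]
    refine Finset.sum_congr rfl fun t _ => ?_
    ring
  have hT1 : (((i:ℝ)+1) + 2*((i:ℝ)+2)*x)*Bb x p (i+1)
      = (∑ t ∈ Finset.range (p+1), ((i:ℝ)+1) * Aa p (i+t+1) * (((i+t+2).choose (i+2) : ℕ) : ℝ) * x^t)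
        + ∑ t ∈ Finset.range (p+1), 2*((i:ℝ)+2) * Aa p (i+t) * (((i+t+1).choose (i+2) : ℕ) : ℝ) * x^t := by
    have hshift : ∑ t ∈ Finset.range (p+1),
          2*((i:ℝ)+2) * Aa p (i+t+1) * (((i+t+2).choose (i+2) : ℕ) : ℝ) * x^(t+1)
        = ∑ t ∈ Finset.range (p+1), 2*((i:ℝ)+2) * Aa p (i+t) * (((i+t+1).choose (i+2) : ℕ) : ℝ) * x^t := by
      refine shift_sum (n := p+1)
        (f := fun u => 2*((i:ℝ)+2) * Aa p (i+u) * (((i+u+1).choose (i+2) : ℕ) : ℝ) * x^u) ?_ ?_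
      · simp [Nat.choose_eq_zero_of_lt (by omega : i+0+1 < i+2)]
      · simp [Aa_vanish p (i+(p+1)) (by omega)]
    unfold Bb
    rw [add_mul, Finset.mul_sum, Finset.mul_sum, ← hshift, ← Finset.sum_add_distrib,
      ← Finset.sum_add_distrib]
    refine Finset.sum_congr rfl fun t _ => ?_
    rw [show i+1+t = i+t+1 by omega, show i+t+1+1 = i+t+2 by omega, show i+1+1 = i+2 by omega]
    ring
  have hT2 : ((i:ℝ)+3)*(x*(x+1))*Bb x p (i+2)
      = (∑ t ∈ Finset.range (p+1), ((i:ℝ)+3) * Aa p (i+t+1) * (((i+t+2).choose (i+3) : ℕ) : ℝ) * x^t)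
        + ∑ t ∈ Finset.range (p+1), ((i:ℝ)+3) * Aa p (i+t) * (((i+t+1).choose (i+3) : ℕ) : ℝ) * x^t := by
    have hs1 : ∑ t ∈ Finset.range (p+1),
          ((i:ℝ)+3) * Aa p (i+t+2) * (((i+t+3).choose (i+3) : ℕ) : ℝ) * x^(t+1)
        = ∑ t ∈ Finset.range (p+1), ((i:ℝ)+3) * Aa p (i+t+1) * (((i+t+2).choose (i+3) : ℕ) : ℝ) * x^t := by
      refine shift_sum (n := p+1)
        (f := fun u => ((i:ℝ)+3) * Aa p (i+u+1) * (((i+u+2).choose (i+3) : ℕ) : ℝ) * x^u) ?_ ?_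
      · simp [Nat.choose_eq_zero_of_lt (by omega : i+0+2 < i+3)]
      · simp [Aa_vanish p (i+(p+1)+1) (by omega)]
    have hs2 : ∑ t ∈ Finset.range (p+1),
          ((i:ℝ)+3) * Aa p (i+t+1) * (((i+t+2).choose (i+3) : ℕ) : ℝ) * x^(t+1)
        = ∑ t ∈ Finset.range (p+1), ((i:ℝ)+3) * Aa p (i+t) * (((i+t+1).choose (i+3) : ℕ) : ℝ) * x^t := by
      refine shift_sum (n := p+1)
        (f := fun u => ((i:ℝ)+3) * Aa p (i+u) * (((i+u+1).choose (i+3) : ℕ) : ℝ) * x^u) ?_ ?_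
      · simp [Nat.choose_eq_zero_of_lt (by omega : i+0+1 < i+3)]
      · simp [Aa_vanish p (i+(p+1)) (by omega)]
    have hs0 : ∑ t ∈ Finset.range (p+1),
          ((i:ℝ)+3) * Aa p (i+t+2) * (((i+t+3).choose (i+3) : ℕ) : ℝ) * x^(t+2)
        = ∑ t ∈ Finset.range (p+1), ((i:ℝ)+3) * Aa p (i+t+1) * (((i+t+2).choose (i+3) : ℕ) : ℝ) * x^(t+1) := by
      refine shift_sum (n := p+1)
        (f := fun u => ((i:ℝ)+3) * Aa p (i+u+1) * (((i+u+2).choose (i+3) : ℕ) : ℝ) * x^(u+1)) ?_ ?_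
      · simp [Nat.choose_eq_zero_of_lt (by omega : i+0+2 < i+3)]
      · simp [Aa_vanish p (i+(p+1)+1) (by omega)]
    unfold Bb
    rw [Finset.mul_sum, ← hs1, ← hs2, ← hs0, ← Finset.sum_add_distrib]
    refine Finset.sum_congr rfl fun t _ => ?_
    rw [show i+2+t = i+t+2 by omega, show i+t+2+1 = i+t+3 by omega, show i+2+1 = i+3 by omega]
    ring
  rw [hL, hT0, hT1, hT2, ← Finset.sum_add_distrib, ← Finset.sum_add_distrib,
    ← Finset.sum_add_distrib, ← Finset.sum_add_distrib]
  refine Finset.sum_congr rfl fun t _ => ?_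
  have e1 := id1_nat i t
  have e1r := congrArg (fun z : ℕ => (z:ℝ)) e1
  push_cast at e1r
  have e2 := id2_real i t
  linear_combination (-(Aa p (i+t+1) * x^t)) * e1r + (Aa p (i+t) * x^t) * e2

lemma Bb_rec_all (x : ℝ) (p i : ℕ) :
    Bb x (p+1) i = (i:ℝ) * Bb x p (i-1) + ((i:ℝ) + 2*((i:ℝ)+1)*x) * Bb x p i
      + ((i:ℝ)+2)*(x*(x+1))*Bb x p (i+1) := by
  cases i with
  | zero =>
    rw [Bb_rec0]
    push_cast
    ring
  | succ i =>
    rw [Bb_rec]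
    rw [show i+1-1 = i from rfl]
    push_cast
    ring

noncomputable def Gg (x : ℝ) (r s L : ℕ) : ℝ :=
  ∑ i ∈ Finset.range L, ((i:ℝ)+1) * (x*(x+1))^i * Bb x r i * Bb x s i

lemma cross_shift (x : ℝ) (r s M : ℕ) (hs : s ≤ M) :
    ∑ i ∈ Finset.range (M+1), (i:ℝ)*((i:ℝ)+1)*(x*(x+1))^i * Bb x r (i-1) * Bb x s i
      = ∑ i ∈ Finset.range (M+1), ((i:ℝ)+1)*((i:ℝ)+2)*(x*(x+1))^(i+1) * Bb x r i * Bb x s (i+1) := by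
  rw [Finset.sum_range_succ'
    (f := fun i => (i:ℝ)*((i:ℝ)+1)*(x*(x+1))^i * Bb x r (i-1) * Bb x s i)]
  rw [Finset.sum_range_succ
    (f := fun i => ((i:ℝ)+1)*((i:ℝ)+2)*(x*(x+1))^(i+1) * Bb x r i * Bb x s (i+1))]
  rw [Bb_vanish x (show s < M+1 by omega)]
  simp only [Nat.cast_zero, zero_mul, mul_zero, add_zero, Nat.add_sub_cancel]
  refine Finset.sum_congr rfl fun i _ => ?_
  push_cast
  ring

lemma Gg_expand (x : ℝ) (a b M : ℕ) :
    Gg x (a+1) b (M+1)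
      = (∑ i ∈ Finset.range (M+1), (i:ℝ)*((i:ℝ)+1)*(x*(x+1))^i * Bb x a (i-1) * Bb x b i)
        + (∑ i ∈ Finset.range (M+1), ((i:ℝ)+1)*((i:ℝ) + 2*((i:ℝ)+1)*x)*(x*(x+1))^i * Bb x a i * Bb x b i)
        + (∑ i ∈ Finset.range (M+1), ((i:ℝ)+1)*((i:ℝ)+2)*(x*(x+1))^(i+1) * Bb x a (i+1) * Bb x b i) := by
  unfold Gg
  rw [← Finset.sum_add_distrib, ← Finset.sum_add_distrib]
  refine Finset.sum_congr rfl fun i _ => ?_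
  rw [Bb_rec_all]
  ring

lemma Gg_comm (x : ℝ) (r s L : ℕ) : Gg x r s L = Gg x s r L := by
  unfold Gg
  exact Finset.sum_congr rfl fun i _ => by ring

lemma transfer (x : ℝ) {r s M : ℕ} (hr : r ≤ M) (hs : s ≤ M) :
    Gg x (r+1) s (M+1) = Gg x r (s+1) (M+1) := by
  have h1 := cross_shift x r s M hs
  have h2 := cross_shift x s r M hr
  rw [Gg_expand x r s M, Gg_comm, Gg_expand x s r M]
  have c2 : ∑ i ∈ Finset.range (M+1), ((i:ℝ)+1)*((i:ℝ) + 2*((i:ℝ)+1)*x)*(x*(x+1))^i * Bb x s i * Bb x r i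
      = ∑ i ∈ Finset.range (M+1), ((i:ℝ)+1)*((i:ℝ) + 2*((i:ℝ)+1)*x)*(x*(x+1))^i * Bb x r i * Bb x s i :=
    Finset.sum_congr rfl fun i _ => by ring
  have c1 : ∑ i ∈ Finset.range (M+1), ((i:ℝ)+1)*((i:ℝ)+2)*(x*(x+1))^(i+1) * Bb x s (i+1) * Bb x r i
      = ∑ i ∈ Finset.range (M+1), ((i:ℝ)+1)*((i:ℝ)+2)*(x*(x+1))^(i+1) * Bb x s i * Bb x r (i+1)
        + (∑ i ∈ Finset.range (M+1), ((i:ℝ)+1)*((i:ℝ)+2)*(x*(x+1))^(i+1) * Bb x r i * Bb x s (i+1)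
          - ∑ i ∈ Finset.range (M+1), (i:ℝ)*((i:ℝ)+1)*(x*(x+1))^i * Bb x s (i-1) * Bb x r i) := by
    rw [← h2]
    have : ∑ i ∈ Finset.range (M+1), ((i:ℝ)+1)*((i:ℝ)+2)*(x*(x+1))^(i+1) * Bb x s (i+1) * Bb x r i
        = ∑ i ∈ Finset.range (M+1), ((i:ℝ)+1)*((i:ℝ)+2)*(x*(x+1))^(i+1) * Bb x r i * Bb x s (i+1) :=
      Finset.sum_congr rfl fun i _ => by ring
    rw [this]
    ring
  have c3 : ∑ i ∈ Finset.range (M+1), ((i:ℝ)+1)*((i:ℝ)+2)*(x*(x+1))^(i+1) * Bb x r (i+1) * Bb x s i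
      = ∑ i ∈ Finset.range (M+1), ((i:ℝ)+1)*((i:ℝ)+2)*(x*(x+1))^(i+1) * Bb x s i * Bb x r (i+1) :=
    Finset.sum_congr rfl fun i _ => by ring
  linarith [h1, h2, c1, c2, c3]

lemma main_ident (x : ℝ) : ∀ r s : ℕ, Bb x (r+s) 0 = Gg x r s (r+s+1) := by
  intro r
  induction r with
  | zero =>
    intro s
    unfold Gg
    rw [Finset.sum_eq_single 0]
    · have h0 : Bb x 0 0 = 1 := by
        have := Bb_diag x 0
        simpa using this
      rw [h0]
      norm_num
    · intro i _ hi
      rw [Bb_vanish x (show (0:ℕ) < i by omega)]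
      ring
    · intro h
      simp at h
  | succ r ih =>
    intro s
    have e1 : r + 1 + s = r + (s + 1) := by omega
    rw [e1, ih (s+1)]
    have e2 : r + (s+1) + 1 = (r+s+1) + 1 := by omega
    rw [e2, ← transfer x (show r ≤ r+s+1 by omega) (show s ≤ r+s+1 by omega)]

lemma Gg_trunc (x : ℝ) {r s L : ℕ} (h : r < L) : Gg x r s L = Gg x r s (r+1) := by
  unfold Gg
  refine (Finset.sum_subset (Finset.range_subset_range.mpr (by omega)) ?_).symm
  intro i _ hi
  rw [Bb_vanish x (show r < i by simp at hi; omega)]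
  ring

lemma main_ident' (x : ℝ) {n r s : ℕ} (hr : r ≤ n) :
    Bb x (r+s) 0 = Gg x r s (n+1) := by
  rw [main_ident x r s, Gg_trunc x (show r < r+s+1 by omega),
    Gg_trunc x (show r < n+1 by omega)]



theorem hankel_one (x : ℝ) (n : ℕ) :
    Matrix.det (Matrix.of fun i j : Fin (n + 1) => Bb x ((i : ℕ) + (j : ℕ)) 0) =
      (x * (x + 1)) ^ ((n + 1).choose 2) * ((n + 1).factorial : ℝ) *
        ∏ k ∈ Finset.range (n + 1), (k.factorial : ℝ) ^ 2 := by
  classical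
  set U : Matrix (Fin (n+1)) (Fin (n+1)) ℝ := Matrix.of fun r i => Bb x (r:ℕ) (i:ℕ) with hU
  set D : Matrix (Fin (n+1)) (Fin (n+1)) ℝ :=
    Matrix.diagonal (fun i : Fin (n+1) => (((i:ℕ):ℝ)+1) * (x*(x+1))^(i:ℕ)) with hD
  have hfact : (Matrix.of fun i j : Fin (n + 1) => Bb x ((i : ℕ) + (j : ℕ)) 0) = U * D * U.transpose := by
    ext r s
    have entry : (U * D * U.transpose) r s
        = ∑ i : Fin (n+1), ((((i:ℕ):ℝ)+1) * (x*(x+1))^(i:ℕ) * Bb x (r:ℕ) (i:ℕ) * Bb x (s:ℕ) (i:ℕ)) := by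
      rw [Matrix.mul_apply]
      refine Finset.sum_congr rfl fun i _ => ?_
      rw [hD, Matrix.mul_diagonal]
      simp only [hU, Matrix.transpose_apply, Matrix.of_apply]
      ring
    rw [entry]
    have : ∑ i : Fin (n+1), ((((i:ℕ):ℝ)+1) * (x*(x+1))^(i:ℕ) * Bb x (r:ℕ) (i:ℕ) * Bb x (s:ℕ) (i:ℕ))
        = Gg x (r:ℕ) (s:ℕ) (n+1) := by
      unfold Gg
      exact Fin.sum_univ_eq_sum_range
        (fun i => (((i:ℕ):ℝ)+1) * (x*(x+1))^i * Bb x (r:ℕ) i * Bb x (s:ℕ) i) (n+1)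
    rw [Matrix.of_apply, this, main_ident' x (show (r:ℕ) ≤ n by omega)]
  rw [hfact, Matrix.det_mul, Matrix.det_mul, Matrix.det_transpose]
  have hUlow : U.BlockTriangular OrderDual.toDual := by
    intro i j hij
    exact Bb_vanish x (show (i:ℕ) < (j:ℕ) from hij)
  have hdetU : U.det = ∏ i ∈ Finset.range (n+1), (i.factorial : ℝ) := by
    rw [Matrix.det_of_lowerTriangular U hUlow]
    rw [← Fin.prod_univ_eq_prod_range (fun i => (i.factorial : ℝ)) (n+1)]
    exact Finset.prod_congr rfl fun i _ => Bb_diag x (i:ℕ)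
  have hdetD : D.det = (x*(x+1)) ^ ((n+1).choose 2) * ((n + 1).factorial : ℝ) := by
    rw [hD, Matrix.det_diagonal]
    rw [Fin.prod_univ_eq_prod_range (fun i => (((i:ℕ):ℝ)+1) * (x*(x+1))^i) (n+1)]
    rw [Finset.prod_mul_distrib, Finset.prod_pow_eq_pow_sum]
    have h1 : ∑ i ∈ Finset.range (n+1), i = (n+1).choose 2 := by
      rw [Finset.sum_range_id, Nat.choose_two_right, Nat.succ_sub_one]
    have h2 : ∏ i ∈ Finset.range (n+1), (((i:ℕ):ℝ)+1) = ((n+1).factorial : ℝ) := by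
      have hh := congrArg (fun z : ℕ => (z:ℝ)) (Finset.prod_range_add_one_eq_factorial (n+1))
      push_cast at hh
      exact hh
    rw [h1, h2]
    ring
  rw [hdetU, hdetD, Finset.prod_pow]
  ring

lemma geom_eq_Bb (x : ℝ) (p : ℕ) : geomPolyMod p x 1 = Bb x p 0 := by
  unfold geomPolyMod Bb
  refine Finset.sum_congr rfl fun k _ => ?_
  rw [Nat.cast_one, one_pow, mul_one, Nat.zero_add, Nat.zero_add, Nat.choose_one_right,
    Nat.factorial_succ, ← fact_stirling p k]
  push_cast
  ring

lemma geom_scale (p : ℕ) (x : ℝ) {m : ℕ} (hm : 0 < m) :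
    geomPolyMod p x m = (m:ℝ)^p * geomPolyMod p (x/m) 1 := by
  have hm' : (m:ℝ) ≠ 0 := Nat.cast_ne_zero.mpr (by omega)
  unfold geomPolyMod
  rw [Finset.mul_sum]
  refine Finset.sum_congr rfl fun k hk => ?_
  have hkp : k ≤ p := by simp at hk; omega
  have hpow : (m:ℝ)^p = (m:ℝ)^(p-k) * (m:ℝ)^k := by
    rw [← pow_add]
    congr 1
    omega
  rw [Nat.cast_one, one_pow, mul_one, div_pow, hpow]
  field_simp

/-- The Hankel determinant of the modified bivariate geometric polynomials is
`(x(x+m))^{C(n+1,2)} · (n+1)! · ∏_{k=0}^n (k!)²`. -/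
theorem geomPolyMod_hankel (m : ℕ) (hm : 0 < m) (x : ℝ) (n : ℕ) :
    Matrix.det (Matrix.of fun i j : Fin (n + 1) => geomPolyMod ((i : ℕ) + (j : ℕ)) x m) =
      (x * (x + m)) ^ ((n + 1).choose 2) * ((n + 1).factorial : ℝ) *
        ∏ k ∈ Finset.range (n + 1), (k.factorial : ℝ) ^ 2 := by
  have hm' : (m:ℝ) ≠ 0 := Nat.cast_ne_zero.mpr (by omega)
  have hsplit : (Matrix.of fun i j : Fin (n + 1) => geomPolyMod ((i : ℕ) + (j : ℕ)) x m)
      = Matrix.of fun i j : Fin (n+1) => (m:ℝ)^(i:ℕ) *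
          ((Matrix.of fun i j : Fin (n+1) => (m:ℝ)^(j:ℕ) *
            ((Matrix.of fun i j : Fin (n+1) => Bb (x/m) ((i:ℕ)+(j:ℕ)) 0) i j)) i j) := by
    ext i j
    simp only [Matrix.of_apply]
    rw [geom_scale ((i:ℕ)+(j:ℕ)) x hm, geom_eq_Bb, pow_add]
    ring
  rw [hsplit, Matrix.det_mul_column, Matrix.det_mul_row, hankel_one]
  have hprod : ∏ i : Fin (n+1), (m:ℝ)^(i:ℕ) = (m:ℝ)^((n+1).choose 2) := by
    rw [Fin.prod_univ_eq_prod_range (fun i => (m:ℝ)^i) (n+1), Finset.prod_pow_eq_pow_sum]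
    congr 1
    rw [Finset.sum_range_id, Nat.choose_two_right, Nat.succ_sub_one]
  rw [hprod]
  have hdiv : x/(m:ℝ) * (x/(m:ℝ) + 1) = x*(x+(m:ℝ)) / ((m:ℝ)*(m:ℝ)) := by
    field_simp
  rw [hdiv, div_pow, mul_pow]
  have hc : (m:ℝ)^((n+1).choose 2) ≠ 0 := by positivity
  field_simp
  ring
end
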